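/- Let E be a real inner product space, n a natural number, z, u : Fin n → E, μ ∈ E, and O : E ≃ₗᵢ E a linear isometry equivalence of E. Then a permutation π₀ of Fin n minimizes the map π ↦ ∑_{i} ‖z i − u (π i)‖² over all permutations of Fin n if and only if π₀ minimizes the map π ↦ ∑_{i} ‖(μ + O (z i)) − O (u (π i))‖² over all permutations of Fin n. -/

import Mathlib

open scoped BigOperators

lemma sum_shift_aux
    {E : Type*} [NormedAddCommGroup E] [InnerProductSpace ℝ E]
    (n : ℕ) (z u : Fin n → E) (μ : E) (O : E ≃ₗᵢ[ℝ] E) (π : Equiv.Perm (Fin n)) :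
    (∑ i, ‖(μ + O (z i)) - O (u (π i))‖ ^ 2)
      = (∑ i, ‖z i - u (π i)‖ ^ 2)
        + (n * ‖μ‖ ^ 2 + 2 * inner ℝ μ (O (∑ i, z i - ∑ i, u i))) := by
  have hterm : ∀ i, ‖(μ + O (z i)) - O (u (π i))‖ ^ 2
      = ‖z i - u (π i)‖ ^ 2 + ‖μ‖ ^ 2 + 2 * inner ℝ μ (O (z i - u (π i))) := by
    intro i
    have : (μ + O (z i)) - O (u (π i)) = μ + O (z i - u (π i)) := by
      rw [map_sub]; abel
    rw [this, norm_add_sq_real, O.norm_map]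
    ring
  rw [Finset.sum_congr rfl (fun i _ => hterm i)]
  rw [Finset.sum_add_distrib, Finset.sum_add_distrib]
  have h1 : (∑ _i : Fin n, ‖μ‖ ^ 2) = n * ‖μ‖ ^ 2 := by
    simp [Finset.sum_const, nsmul_eq_mul]
  have h2 : (∑ i, 2 * inner ℝ μ (O (z i - u (π i))) : ℝ)
      = 2 * inner ℝ μ (O (∑ i, z i - ∑ i, u i)) := by
    have hs : (∑ i, (z i - u (π i))) = ∑ i, z i - ∑ i, u i := by
      rw [Finset.sum_sub_distrib, Equiv.sum_comp]
    rw [← Finset.mul_sum, ← inner_sum, ← map_sum, hs]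
  rw [h1, h2]
  ring

theorem optimal_assignment_orthogonal_invariant
    {E : Type*} [NormedAddCommGroup E] [InnerProductSpace ℝ E]
    (n : ℕ) (z u : Fin n → E) (μ : E) (O : E ≃ₗᵢ[ℝ] E) (π₀ : Equiv.Perm (Fin n)) :
    (∀ π : Equiv.Perm (Fin n),
        (∑ i, ‖z i - u (π₀ i)‖ ^ 2) ≤ ∑ i, ‖z i - u (π i)‖ ^ 2) ↔
    (∀ π : Equiv.Perm (Fin n),
        (∑ i, ‖(μ + O (z i)) - O (u (π₀ i))‖ ^ 2)
          ≤ ∑ i, ‖(μ + O (z i)) - O (u (π i))‖ ^ 2) := by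
  constructor <;> intro h π <;> have := h π
  · rw [sum_shift_aux, sum_shift_aux]
    linarith
  · rw [sum_shift_aux n z u μ O π₀, sum_shift_aux n z u μ O π] at this
    linarith
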